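/- Let A, B be as above and for m >= 1 set W_m = (BA^{-1})^m (B^{-1}A)^m. Then det(I - (BA^{-1})^m (I + AB^{-1} + ... + (AB^{-1})^m)) = det(I + BA^{-1} + ... + (BA^{-1})^{m-1}). -/

import Mathlib

noncomputable section

/-- The ring of Laurent polynomials in `s` and ordinary polynomials in `y`
over `ℂ`, i.e. `ℂ[s^{±1}, y]`. -/
abbrev R2 : Type := AddMonoidAlgebra ℂ (ℤ × ℕ)

/-- The variable `s`. -/
def s : R2 := AddMonoidAlgebra.single (1, 0) 1
/-- The inverse variable `s⁻¹`. -/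
def sInv : R2 := AddMonoidAlgebra.single (-1, 0) 1
/-- The variable `y`. -/
def y : R2 := AddMonoidAlgebra.single (0, 1) 1

/-- `A = [[s,1],[0,s⁻¹]]`. -/
def A : Matrix (Fin 2) (Fin 2) R2 := !![s, 1; 0, sInv]
/-- `B = [[s,0],[-y,s⁻¹]]`. -/
def B : Matrix (Fin 2) (Fin 2) R2 := !![s, 0; -y, sInv]

lemma s_mul_sInv : s * sInv = 1 := by
  simp [s, sInv, AddMonoidAlgebra.single_mul_single, AddMonoidAlgebra.one_def]
  rfl

lemma detA : A.det = 1 := by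
  rw [A, Matrix.det_fin_two_of]; rw [show (1:R2)*0 = 0 by ring]; rw [sub_zero, s_mul_sInv]

lemma detB : B.det = 1 := by
  rw [B, Matrix.det_fin_two_of]; rw [show (0:R2)*(-y) = 0 by ring]; rw [sub_zero, s_mul_sInv]

lemma hAinv : A * A⁻¹ = 1 := Matrix.mul_nonsing_inv A (by rw [detA]; exact isUnit_one)
lemma hAinv' : A⁻¹ * A = 1 := Matrix.nonsing_inv_mul A (by rw [detA]; exact isUnit_one)
lemma hBinv : B * B⁻¹ = 1 := Matrix.mul_nonsing_inv B (by rw [detB]; exact isUnit_one)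
lemma hBinv' : B⁻¹ * B = 1 := Matrix.nonsing_inv_mul B (by rw [detB]; exact isUnit_one)

lemma huv : (B * A⁻¹) * (A * B⁻¹) = 1 := by
  calc (B * A⁻¹) * (A * B⁻¹) = B * (A⁻¹ * A) * B⁻¹ := by rw [mul_assoc, mul_assoc, mul_assoc]
    _ = 1 := by rw [hAinv', mul_one, hBinv]

lemma hvu : (A * B⁻¹) * (B * A⁻¹) = 1 := by
  calc (A * B⁻¹) * (B * A⁻¹) = A * (B⁻¹ * B) * A⁻¹ := by rw [mul_assoc, mul_assoc, mul_assoc]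
    _ = 1 := by rw [hBinv', mul_one, hAinv]

open Finset in
/-- `det(I - (BA⁻¹)^m (I + AB⁻¹ + ⋯ + (AB⁻¹)^m)) = det(I + BA⁻¹ + ⋯ + (BA⁻¹)^{m-1})`. -/
theorem stmt_6 (m : ℕ) (hm : 1 ≤ m) :
    (1 - (B * A⁻¹) ^ m * (∑ j ∈ range (m + 1), (A * B⁻¹) ^ j)).det =
      (∑ j ∈ range m, (B * A⁻¹) ^ j).det := by
  set M : Type := Matrix (Fin 2) (Fin 2) R2
  let U : Mˣ := ⟨B * A⁻¹, A * B⁻¹, huv, hvu⟩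
  have key : ∀ j ∈ range (m + 1), (B * A⁻¹) ^ m * (A * B⁻¹) ^ j = (B * A⁻¹) ^ (m - j) := by
    intro j hj
    have hj' : j ≤ m := by simpa using Nat.lt_succ_iff.mp (mem_range.mp hj)
    have : (U : M) ^ m * ((U⁻¹ : Mˣ) : M) ^ j = (U : M) ^ (m - j) := by
      rw [← Units.val_pow_eq_pow_val, ← Units.val_pow_eq_pow_val, ← Units.val_mul,
        ← Units.val_pow_eq_pow_val, inv_pow, ← pow_sub U hj']
    exact this
  rw [Finset.mul_sum, Finset.sum_congr rfl key]
  have hre : ∑ j ∈ range (m + 1), (B * A⁻¹) ^ (m - j) = ∑ j ∈ range (m + 1), (B * A⁻¹) ^ j := by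
    rw [← Finset.sum_range_reflect (fun j => (B * A⁻¹) ^ j) (m + 1)]
    exact Finset.sum_congr rfl fun j hj => by congr 1
  rw [hre, Finset.sum_range_succ' (fun j => (B * A⁻¹) ^ j) m]
  have : (1 : M) - (∑ j ∈ range m, (B * A⁻¹) ^ (j + 1) + (B * A⁻¹) ^ 0) =
      -((B * A⁻¹) * ∑ j ∈ range m, (B * A⁻¹) ^ j) := by
    rw [pow_zero, Finset.mul_sum]
    rw [Finset.sum_congr rfl fun j _ => (pow_succ' (B * A⁻¹) j).symm]
    abel
  rw [this, Matrix.det_neg, Matrix.det_mul, Matrix.det_mul, Matrix.det_nonsing_inv, detA, detB]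
  simp [Ring.inverse_one]
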